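/- arXiv:2107.10553 — 4 statements merged into one kernel-verified Lean document; each statement's English description precedes it below -/
import Mathlib

section
/- Let Φ be a Young function (convex, increasing, Φ(0)=0, lim_{t→∞}Φ(t)=∞). Then Φ satisfies the ∇₂-condition (there exists k > 1 with Φ(t) ≤ Φ(kt)/(2k) for all t > 0) if and only if there exists p ∈ (1,∞) such that t ↦ Φ(t)/t^p is almost increasing on (0,∞), i.e., there is C > 0 with Φ(t)/t^p ≤ C Φ(s)/s^p whenever 0 < t < s. -/
open MeasureTheory ENNReal NNReal Metric Set Filter Topology

noncomputable def geninv (Φ : ℝ≥0∞ → ℝ≥0∞) (u : ℝ≥0∞) : ℝ≥0∞ :=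
  sInf {t : ℝ≥0∞ | u < Φ t}

/-- Generalized Young function (class Φ_Y of the paper): increasing, vanishing at 0,
infinite at ∞, convex, left continuous, nondegenerate. -/
def IsYoung (Φ : ℝ≥0∞ → ℝ≥0∞) : Prop :=
  Monotone Φ ∧ Φ 0 = 0 ∧ Φ ⊤ = ⊤ ∧
    (∀ x y a b : ℝ≥0∞, a + b = 1 → Φ (a * x + b * y) ≤ a * Φ x + b * Φ y) ∧
    (∀ t : ℝ≥0∞, 0 < t → ContinuousWithinAt Φ (Set.Iio t) t) ∧
    (∃ t : ℝ≥0∞, 0 < t ∧ Φ t < ⊤) ∧ (∃ t : ℝ≥0∞, t ≠ ⊤ ∧ 0 < Φ t)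

/-- The ∇₂-condition. -/
def Nabla2 (Φ : ℝ≥0∞ → ℝ≥0∞) : Prop :=
  ∃ k : ℝ≥0, 1 < k ∧ ∀ t : ℝ≥0∞, 0 < t → Φ t ≤ Φ ((k : ℝ≥0∞) * t) / (2 * (k : ℝ≥0∞))

/-- `Φ ∈ ∇₂` iff `Φ(t)/t^p` is almost increasing for some `p > 1`. -/
theorem stmt2 (Φ : ℝ≥0∞ → ℝ≥0∞) (hΦ : IsYoung Φ) :
    Nabla2 Φ ↔ ∃ p : ℝ, 1 < p ∧ ∃ C : ℝ≥0∞, 0 < C ∧ C ≠ ⊤ ∧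
      ∀ t s : ℝ≥0∞, 0 < t → t < s → s < ⊤ → Φ t / t ^ p ≤ C * (Φ s / s ^ p) := by
  obtain ⟨hmono, hΦ0, hΦtop, -, -, -, -⟩ := hΦ
  constructor
  · rintro ⟨k, hk1, hk⟩
    have hk0 : (0:ℝ≥0) < k := one_pos.trans hk1
    have hkR1 : (1:ℝ) < (k:ℝ) := hk1
    have hkR0 : (0:ℝ) < (k:ℝ) := hk0
    have h2k0 : (2*(k:ℝ≥0∞)) ≠ 0 := by
      simp [hk0.ne']
    have h2kt : (2*(k:ℝ≥0∞)) ≠ ⊤ := ENNReal.mul_ne_top (by norm_num) ENNReal.coe_ne_top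
    have key : ∀ t : ℝ≥0∞, 0 < t → Φ t * (2*(k:ℝ≥0∞)) ≤ Φ ((k:ℝ≥0∞) * t) := by
      intro t ht
      exact (ENNReal.le_div_iff_mul_le (Or.inl h2k0) (Or.inl h2kt)).mp (hk t ht)
    have iter : ∀ n : ℕ, ∀ t : ℝ≥0∞, 0 < t →
        Φ t * (2*(k:ℝ≥0∞))^n ≤ Φ ((k:ℝ≥0∞)^n * t) := by
      intro n
      induction n with
      | zero => intro t ht; simp
      | succ n ih =>
        intro t ht
        have hkt : (0:ℝ≥0∞) < (k:ℝ≥0∞)^n * t := by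
          apply ENNReal.mul_pos _ ht.ne'
          exact (pow_ne_zero n (by exact_mod_cast hk0.ne'))
        calc Φ t * (2*(k:ℝ≥0∞))^(n+1) = (Φ t * (2*(k:ℝ≥0∞))^n) * (2*(k:ℝ≥0∞)) := by ring
          _ ≤ Φ ((k:ℝ≥0∞)^n * t) * (2*(k:ℝ≥0∞)) := mul_le_mul_left (ih t ht) _
          _ ≤ Φ ((k:ℝ≥0∞) * ((k:ℝ≥0∞)^n * t)) := key _ hkt
          _ = Φ ((k:ℝ≥0∞)^(n+1) * t) := by rw [← mul_assoc, ← pow_succ']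
    set p := Real.logb k (2*k) with hp_def
    have hp1 : 1 < p := by
      have h1 : Real.logb k k < Real.logb k (2*k) := by
        apply Real.logb_lt_logb hkR1 hkR0
        nlinarith
      rwa [Real.logb_self_eq_one hkR1] at h1
    have hp0 : (0:ℝ) ≤ p := by linarith
    have hkp : (k:ℝ)^p = 2*(k:ℝ) := Real.rpow_logb hkR0 (ne_of_gt hkR1) (by positivity)
    refine ⟨p, hp1, 2*(k:ℝ≥0∞), ?_, h2kt, ?_⟩
    · exact pos_iff_ne_zero.mpr h2k0
    intro t s ht hts hs
    have htT : t ≠ ⊤ := (hts.trans hs).ne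
    have hsT : s ≠ ⊤ := hs.ne
    rcases eq_or_ne (Φ t) 0 with hzero | hΦt0
    · simp [hzero, ENNReal.zero_div]
    rcases eq_or_ne (Φ t) ⊤ with htop | hΦtT
    · have hΦs : Φ s = ⊤ := top_le_iff.mp (htop ▸ hmono hts.le)
      have hspT : s ^ p ≠ ⊤ := (ENNReal.rpow_lt_top_of_nonneg hp0 hsT).ne
      rw [hΦs, ENNReal.top_div_of_ne_top hspT, ENNReal.mul_top h2k0]
      exact le_top
    -- main case
    have htr0 : (0:ℝ) < t.toReal := ENNReal.toReal_pos ht.ne' htT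
    have hsr0 : (0:ℝ) < s.toReal := ENNReal.toReal_pos (ht.trans hts).ne' hsT
    have htsr : t.toReal < s.toReal := (ENNReal.toReal_lt_toReal htT hsT).mpr hts
    set r : ℝ := s.toReal / t.toReal with hr_def
    have hr1 : (1:ℝ) ≤ r := (one_le_div htr0).mpr htsr.le
    set n : ℕ := ⌊Real.logb k r⌋₊ with hn_def
    have hlogb0 : (0:ℝ) ≤ Real.logb k r := Real.logb_nonneg hkR1 hr1
    have hr_eq : (k:ℝ) ^ (Real.logb k r) = r := Real.rpow_logb hkR0 (ne_of_gt hkR1) (by linarith)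
    have h1 : (k:ℝ)^n ≤ r := by
      rw [← hr_eq, ← Real.rpow_natCast (k:ℝ) n]
      exact (Real.rpow_le_rpow_left_iff hkR1).mpr (Nat.floor_le hlogb0)
    have h2 : r < (k:ℝ)^(n+1) := by
      rw [← hr_eq, ← Real.rpow_natCast (k:ℝ) (n+1)]
      apply (Real.rpow_lt_rpow_left_iff hkR1).mpr
      push_cast
      exact Nat.lt_floor_add_one _
    have hA : ((k:ℝ≥0∞))^n * t ≤ s := by
      rw [← ENNReal.toReal_le_toReal (ENNReal.mul_ne_top (ENNReal.pow_ne_top ENNReal.coe_ne_top) htT) hsT]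
      rw [ENNReal.toReal_mul, ENNReal.toReal_pow, ENNReal.coe_toReal]
      rw [hr_def] at h1
      exact (le_div_iff₀ htr0).mp h1
    have hΦs : Φ t * (2*(k:ℝ≥0∞))^n ≤ Φ s := (iter n t ht).trans (hmono hA)
    have hsp : s ^ p ≤ (2*(k:ℝ≥0∞))^(n+1) * t ^ p := by
      have hreal : s.toReal ^ p ≤ (2*(k:ℝ))^(n+1) * t.toReal ^ p := by
        have hsb : s.toReal ≤ (k:ℝ)^(n+1) * t.toReal := by
          rw [hr_def] at h2
          exact ((div_lt_iff₀ htr0).mp h2).le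
        calc s.toReal ^ p ≤ ((k:ℝ)^(n+1) * t.toReal) ^ p :=
              Real.rpow_le_rpow hsr0.le hsb hp0
          _ = ((k:ℝ)^(n+1))^p * t.toReal ^ p := Real.mul_rpow (by positivity) htr0.le
          _ = (2*(k:ℝ))^(n+1) * t.toReal ^ p := by
              rw [← Real.rpow_natCast (k:ℝ) (n+1), ← Real.rpow_mul hkR0.le,
                mul_comm ((n+1:ℕ):ℝ) p, Real.rpow_mul hkR0.le, hkp, Real.rpow_natCast]
      have hfin1 : s ^ p ≠ ⊤ := (ENNReal.rpow_lt_top_of_nonneg hp0 hsT).ne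
      have hfin2 : (2*(k:ℝ≥0∞))^(n+1) * t ^ p ≠ ⊤ :=
        ENNReal.mul_ne_top (ENNReal.pow_ne_top h2kt) (ENNReal.rpow_lt_top_of_nonneg hp0 htT).ne
      rw [← ENNReal.toReal_le_toReal hfin1 hfin2]
      rw [ENNReal.toReal_mul, ENNReal.toReal_pow, ← ENNReal.toReal_rpow, ← ENNReal.toReal_rpow,
        ENNReal.toReal_mul, ENNReal.coe_toReal]
      simpa using hreal
    have hD0 : ((2*(k:ℝ≥0∞))^(n+1)) ≠ 0 := pow_ne_zero _ h2k0
    have hDt : ((2*(k:ℝ≥0∞))^(n+1)) ≠ ⊤ := ENNReal.pow_ne_top h2kt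
    calc Φ t / t ^ p
        = ((2*(k:ℝ≥0∞))^(n+1) * Φ t) / ((2*(k:ℝ≥0∞))^(n+1) * t ^ p) := by
          rw [ENNReal.mul_div_mul_left _ _ hD0 hDt]
      _ ≤ ((2*(k:ℝ≥0∞))^(n+1) * Φ t) / s ^ p := ENNReal.div_le_div le_rfl hsp
      _ = (2*(k:ℝ≥0∞)) * ((Φ t * (2*(k:ℝ≥0∞))^n) / s ^ p) := by
          rw [← mul_div_assoc]; ring_nf
      _ ≤ (2*(k:ℝ≥0∞)) * (Φ s / s ^ p) :=
          mul_le_mul_right (ENNReal.div_le_div hΦs le_rfl) _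
  · rintro ⟨p, hp1, C, hC0, hCt, hC⟩
    set c : ℝ := C.toReal with hc_def
    have hc0 : (0:ℝ) ≤ c := ENNReal.toReal_nonneg
    set k : ℝ := max 2 ((2*c)^((p-1)⁻¹)) with hk_def
    have hk2 : (2:ℝ) ≤ k := le_max_left _ _
    have hk1 : (1:ℝ) < k := by linarith
    have hk0 : (0:ℝ) < k := by linarith
    have hkp : 2*c ≤ k^(p-1) := by
      have h := le_max_right 2 ((2*c)^((p-1)⁻¹))
      calc 2*c = ((2*c)^((p-1)⁻¹))^(p-1) := (Real.rpow_inv_rpow (by positivity) (by linarith)).symm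
        _ ≤ k^(p-1) := Real.rpow_le_rpow (by positivity) h (by linarith)
    set K : ℝ≥0 := ⟨k, hk0.le⟩ with hK_def
    have hK1 : (1:ℝ≥0) < K := by exact_mod_cast hk1
    have hK0 : K ≠ 0 := by
      intro h; rw [h] at hK1; exact absurd hK1 (by norm_num)
    have h2K0 : (2*(K:ℝ≥0∞)) ≠ 0 := by simp [hK0]
    have h2Kt : (2*(K:ℝ≥0∞)) ≠ ⊤ := ENNReal.mul_ne_top (by norm_num) ENNReal.coe_ne_top
    refine ⟨K, hK1, ?_⟩
    intro t ht
    rcases eq_or_ne t ⊤ with rfl | htT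
    · rw [ENNReal.mul_top (by exact_mod_cast hK0), hΦtop, ENNReal.top_div_of_ne_top h2Kt]
    have hKtT : (K:ℝ≥0∞) * t ≠ ⊤ := ENNReal.mul_ne_top ENNReal.coe_ne_top htT
    rcases eq_or_ne (Φ ((K:ℝ≥0∞) * t)) ⊤ with htop | hΦsT
    · rw [htop, ENNReal.top_div_of_ne_top h2Kt]; exact le_top
    rcases eq_or_ne (Φ t) 0 with hzero | hΦt0
    · rw [hzero]; exact zero_le
    have hlt : t < (K:ℝ≥0∞) * t := by
      conv_lhs => rw [← one_mul t]
      rw [mul_comm 1 t, mul_comm (K:ℝ≥0∞) t, ENNReal.mul_lt_mul_iff_right ht.ne' htT]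
      exact_mod_cast hK1
    have hltT : (K:ℝ≥0∞) * t < ⊤ := lt_top_iff_ne_top.mpr hKtT
    have h := hC t ((K:ℝ≥0∞) * t) ht hlt hltT
    have hΦtT : Φ t ≠ ⊤ := fun h' => hΦsT (top_le_iff.mp (h' ▸ hmono hlt.le))
    -- move to reals
    have htr0 : (0:ℝ) < t.toReal := ENNReal.toReal_pos ht.ne' htT
    set tr := t.toReal with htr_def
    set φt := (Φ t).toReal with hφt_def
    set φs := (Φ ((K:ℝ≥0∞) * t)).toReal with hφs_def
    have hφs0 : (0:ℝ) ≤ φs := ENNReal.toReal_nonneg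
    have hp0 : (0:ℝ) ≤ p := by linarith
    have hRHSfin : C * (Φ ((K:ℝ≥0∞)*t) / ((K:ℝ≥0∞)*t) ^ p) ≠ ⊤ := by
      apply ENNReal.mul_ne_top hCt
      apply ne_of_lt
      apply ENNReal.div_lt_top hΦsT
      exact (ENNReal.rpow_pos (ENNReal.mul_pos (by exact_mod_cast hK0) ht.ne') hKtT).ne'
    have hreal : φt / tr ^ p ≤ c * (φs / (k * tr) ^ p) := by
      have := ENNReal.toReal_mono hRHSfin h
      rw [ENNReal.toReal_div, ENNReal.toReal_mul, ENNReal.toReal_div,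
        ← ENNReal.toReal_rpow, ← ENNReal.toReal_rpow, ENNReal.toReal_mul,
        ENNReal.coe_toReal] at this
      exact this
    have hkp_pos : (0:ℝ) < k^p := Real.rpow_pos_of_pos hk0 p
    have htp_pos : (0:ℝ) < tr^p := Real.rpow_pos_of_pos htr0 p
    have e1 : φt * k^p ≤ c * φs := by
      have hsplit : c * (φs / (k * tr) ^ p) = (c * φs / k^p) / tr^p := by
        rw [Real.mul_rpow hk0.le htr0.le]
        field_simp
      rw [hsplit, div_le_div_iff_of_pos_right htp_pos] at hreal
      rw [le_div_iff₀ hkp_pos] at hreal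
      exact hreal
    have e2 : 2*k*c ≤ k^p := by
      have hkk : k^p = k * k^(p-1) := by
        have h' : k ^ ((1:ℝ) + (p-1)) = k ^ (1:ℝ) * k^(p-1) := Real.rpow_add hk0 1 (p-1)
        rw [show (1:ℝ)+(p-1) = p by ring, Real.rpow_one] at h'
        exact h'
      rw [hkk]
      nlinarith [mul_le_mul_of_nonneg_left hkp hk0.le]
    -- conclude
    rw [ENNReal.le_div_iff_mul_le (Or.inl h2K0) (Or.inl h2Kt)]
    rw [← ENNReal.toReal_le_toReal (ENNReal.mul_ne_top hΦtT h2Kt) hΦsT]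
    rw [ENNReal.toReal_mul, ENNReal.toReal_mul, ENNReal.coe_toReal]
    show φt * ((2:ℝ≥0∞).toReal * k) ≤ φs
    rw [show ((2:ℝ≥0∞)).toReal = 2 by simp]
    nlinarith [mul_le_mul_of_nonneg_right e2 hφs0, e1, hkp_pos, hc0, hφs0,
      mul_le_mul_of_nonneg_left e1 (by linarith : (0:ℝ) ≤ 2*k)]
end

section
/- Let Φ be a Young function with b(Φ) < ∞ and Φ(b(Φ)) < ∞, and let 0 < δ < 1. Then there exists a Young function Ψ with b(Ψ) = b(Φ) and Ψ(b(Ψ)) = ∞ such that Ψ(δt) ≤ Φ(t) ≤ Ψ(t) for all t ∈ [0,∞). -/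
open MeasureTheory ENNReal NNReal Metric Set Filter Topology

/-- A monotone `ℝ≥0∞`-valued function whose value at `t` is the sup of its values
on `Iio t` is left continuous at `t`. -/
lemma leftCont_of_sup {f : ℝ≥0∞ → ℝ≥0∞} (hf : Monotone f) {t : ℝ≥0∞}
    (h : sSup (f '' Iio t) = f t) : ContinuousWithinAt f (Iio t) t := by
  have := hf.tendsto_nhdsLT t
  rw [h] at this
  exact this

/-- Convexity of `t ↦ K * (t - c)` in `ℝ≥0∞`. -/
lemma ell_convex (K c x y a b : ℝ≥0∞) (hab : a + b = 1) :
    K * ((a * x + b * y) - c) ≤ a * (K * (x - c)) + b * (K * (y - c)) := by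
  have key : (a * x + b * y) - c ≤ a * (x - c) + b * (y - c) := by
    rw [tsub_le_iff_right]
    have hx : a * x ≤ a * (x - c) + a * c := by
      rw [← mul_add]; exact mul_le_mul_right le_tsub_add a
    have hy : b * y ≤ b * (y - c) + b * c := by
      rw [← mul_add]; exact mul_le_mul_right le_tsub_add b
    calc a * x + b * y ≤ (a * (x - c) + a * c) + (b * (y - c) + b * c) := add_le_add hx hy
      _ = a * (x - c) + b * (y - c) + (a + b) * c := by ring
      _ = a * (x - c) + b * (y - c) + c := by rw [hab, one_mul]
  calc K * ((a * x + b * y) - c) ≤ K * (a * (x - c) + b * (y - c)) := mul_le_mul_right key K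
    _ = a * (K * (x - c)) + b * (K * (y - c)) := by ring

/-- A Young function of class `Y^(3)` is sandwiched by one of class `Y^(2)`
with the same `b(Φ)`. -/
theorem stmt3 (Φ : ℝ≥0∞ → ℝ≥0∞) (hΦ : IsYoung Φ)
    (hb : sInf {t : ℝ≥0∞ | Φ t = ⊤} < ⊤) (hΦb : Φ (sInf {t : ℝ≥0∞ | Φ t = ⊤}) < ⊤)
    (δ : ℝ≥0) (hδ0 : 0 < δ) (hδ1 : δ < 1) :
    ∃ Ψ : ℝ≥0∞ → ℝ≥0∞, IsYoung Ψ ∧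
      sInf {t : ℝ≥0∞ | Ψ t = ⊤} = sInf {t : ℝ≥0∞ | Φ t = ⊤} ∧
      Ψ (sInf {t : ℝ≥0∞ | Ψ t = ⊤}) = ⊤ ∧
      ∀ t : ℝ≥0∞, t ≠ ⊤ → Ψ ((δ : ℝ≥0∞) * t) ≤ Φ t ∧ Φ t ≤ Ψ t := by
  obtain ⟨hmono, h0, htop, hconv, hcont, ⟨t0, ht0pos, ht0fin⟩, ⟨t1, ht1fin, ht1pos⟩⟩ := hΦ
  set b : ℝ≥0∞ := sInf {t : ℝ≥0∞ | Φ t = ⊤} with hbdef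
  -- basic facts about b
  have hbpos : 0 < b := by
    refine lt_of_lt_of_le ht0pos (le_sInf fun s hs => ?_)
    by_contra hlt
    have h1 : Φ s < ⊤ := lt_of_le_of_lt (hmono (le_of_not_ge hlt)) ht0fin
    rw [Set.mem_setOf_eq] at hs
    exact h1.ne hs
  have hbne : b ≠ ⊤ := hb.ne
  have hΦlt : ∀ t : ℝ≥0∞, t < b → Φ t < ⊤ := fun t ht => by
    by_contra h
    exact absurd (sInf_le (by simpa using h) : b ≤ t) (not_le.2 ht)
  have hΦtop : ∀ t : ℝ≥0∞, b < t → Φ t = ⊤ := fun t ht => by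
    obtain ⟨s, hs, hst⟩ := sInf_lt_iff.mp ht
    exact top_le_iff.mp (hs ▸ hmono hst.le)
  -- the NNReal data
  set b' : ℝ≥0 := b.toNNReal with hb'def
  have hbb' : b = (b' : ℝ≥0∞) := (ENNReal.coe_toNNReal hbne).symm
  have hb'pos : 0 < b' := by
    rw [hbb'] at hbpos; exact_mod_cast hbpos
  set ε : ℝ≥0 := (1 - δ) * b' with hεdef
  have hεpos : 0 < ε := mul_pos (tsub_pos_of_lt hδ1) hb'pos
  have hεle : ε ≤ b' := by
    calc ε ≤ 1 * b' := mul_le_mul_left tsub_le_self b'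
      _ = b' := one_mul b'
  have hδb' : δ * b' + ε = b' := by
    rw [hεdef, ← add_mul, add_tsub_cancel_of_le hδ1.le, one_mul]
  set c : ℕ → ℝ≥0 := fun n => b' - ε / (n + 1) with hcdef
  have hεn_le : ∀ n : ℕ, ε / (n + 1) ≤ ε := fun n =>
    div_le_self (zero_le) (le_add_of_nonneg_left (n.cast_nonneg' ))
  have hc_ge : ∀ n : ℕ, δ * b' ≤ c n := fun n => by
    have : b' - ε ≤ c n := tsub_le_tsub_left (hεn_le n) b'
    refine le_trans (le_of_eq ?_) this
    nth_rewrite 2 [← hδb']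
    rw [add_tsub_cancel_right]
  have hbc : ∀ n : ℕ, b - (c n : ℝ≥0∞) = ((ε / (n + 1) : ℝ≥0) : ℝ≥0∞) := fun n => by
    rw [hbb', ← ENNReal.coe_sub, hcdef]
    congr 1
    exact tsub_tsub_cancel_of_le (le_trans (hεn_le n) hεle)
  -- the auxiliary function g
  set g : ℝ≥0∞ → ℝ≥0∞ := fun t => ⨆ n : ℕ, ((n : ℝ≥0∞) + 1) ^ 2 * (t - c n) with hgdef
  have hgmono : Monotone g := fun s t hst =>
    iSup_mono fun n => mul_le_mul_right (tsub_le_tsub_right hst _) _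
  -- g vanishes on [0, δ b]
  have hg0 : ∀ t : ℝ≥0∞, t ≤ (δ : ℝ≥0∞) * b → g t = 0 := fun t ht => by
    have hδb : (δ : ℝ≥0∞) * b = ((δ * b' : ℝ≥0) : ℝ≥0∞) := by
      rw [hbb', ENNReal.coe_mul]
    refine le_antisymm (iSup_le fun n => ?_) (zero_le)
    have htc : t ≤ (c n : ℝ≥0∞) := le_trans ht (by rw [hδb]; exact_mod_cast hc_ge n)
    rw [tsub_eq_zero_of_le htc, mul_zero]
  -- g is infinite at b
  have hgb : g b = ⊤ := by
    have hterm : ∀ n : ℕ, ((n : ℝ≥0∞) + 1) ^ 2 * (b - c n)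
        = (((n : ℝ≥0) + 1) * ε : ℝ≥0) := fun n => by
      rw [hbc n]
      have hne : ((n : ℝ≥0) + 1) ≠ 0 := by positivity
      have : ((n : ℝ≥0) + 1) ^ 2 * (ε / (n + 1)) = ((n : ℝ≥0) + 1) * ε := by
        field_simp
      rw [← this]
      push_cast
      ring
    rw [hgdef]
    simp only [hterm]
    rw [eq_top_iff, ← ENNReal.top_mul (by exact_mod_cast hεpos.ne' : (ε : ℝ≥0∞) ≠ 0),
      ← ENNReal.iSup_natCast, ENNReal.iSup_mul]
    refine iSup_le fun n => ?_
    refine le_trans ?_ (le_iSup _ n)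
    push_cast
    exact mul_le_mul_left (le_add_of_nonneg_right zero_le_one) _
  -- g is finite below b
  have hgfin : ∀ t : ℝ≥0∞, t < b → g t < ⊤ := fun t ht => by
    have htne : t ≠ ⊤ := ht.trans hb |>.ne
    set t' : ℝ≥0 := t.toNNReal with ht'def
    have htt' : t = (t' : ℝ≥0∞) := (ENNReal.coe_toNNReal htne).symm
    have ht'b' : t' < b' := by
      rw [htt'] at ht; rw [hbb'] at ht; exact_mod_cast ht
    obtain ⟨N, hN⟩ := exists_nat_gt (ε / (b' - t') : ℝ≥0)
    have hzero : ∀ n : ℕ, N ≤ n → t ≤ (c n : ℝ≥0∞) := fun n hn => by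
      have hbtpos : (0 : ℝ≥0) < b' - t' := tsub_pos_of_lt ht'b'
      have h1 : ε < ((n : ℝ≥0) + 1) * (b' - t') := by
        calc ε < N * (b' - t') := (div_lt_iff₀ hbtpos).mp hN
          _ ≤ ((n : ℝ≥0) + 1) * (b' - t') := by
              refine mul_le_mul_left ?_ _
              exact_mod_cast Nat.le_succ_of_le hn
      have h2 : ε / (n + 1) ≤ b' - t' := by
        rw [div_le_iff₀ (by positivity : (0 : ℝ≥0) < (n : ℝ≥0) + 1), mul_comm]
        exact h1.le
      have : t' ≤ c n := by
        have := tsub_le_tsub_left h2 b'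
        rw [tsub_tsub_cancel_of_le ht'b'.le] at this
        exact le_trans this (le_refl _)
      rw [htt']; exact_mod_cast this
    have hbound : g t ≤ ((N : ℝ≥0∞) + 1) ^ 2 * t := by
      refine iSup_le fun n => ?_
      rcases le_or_gt N n with hn | hn
      · rw [tsub_eq_zero_of_le (hzero n hn), mul_zero]; exact zero_le
      · have h1 : ((n : ℝ≥0∞) + 1) ^ 2 ≤ ((N : ℝ≥0∞) + 1) ^ 2 := by
          gcongr
        exact mul_le_mul' h1 tsub_le_self
    refine lt_of_le_of_lt hbound ?_
    refine ENNReal.mul_lt_top (ENNReal.pow_lt_top ?_) htne.lt_top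
    exact lt_of_lt_of_le (ENNReal.add_lt_top.mpr ⟨ENNReal.natCast_lt_top N, ENNReal.one_lt_top⟩) le_rfl
  -- left continuity of g
  have hgcont : ∀ t : ℝ≥0∞, 0 < t → ContinuousWithinAt g (Iio t) t := fun t ht => by
    refine leftCont_of_sup hgmono ?_
    rw [sSup_image]
    have hIio : (⨆ s : Iio t, (s : ℝ≥0∞)) = t := by
      rw [← sSup_eq_iSup']
      exact isLUB_Iio.sSup_eq
    calc (⨆ s ∈ Iio t, g s) = ⨆ n : ℕ, ⨆ s : Iio t, ((n : ℝ≥0∞) + 1) ^ 2 * ((s : ℝ≥0∞) - c n) := by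
          rw [hgdef]
          rw [iSup_subtype']
          exact iSup_comm
      _ = ⨆ n : ℕ, ((n : ℝ≥0∞) + 1) ^ 2 * (t - c n) := by
          refine iSup_congr fun n => ?_
          rw [← ENNReal.mul_iSup, ← ENNReal.iSup_sub, hIio]
      _ = g t := rfl
  -- the candidate Ψ
  set Ψ : ℝ≥0∞ → ℝ≥0∞ := fun t => Φ t + g t with hΨdef
  have hΨset : {t : ℝ≥0∞ | Ψ t = ⊤} = Ici b := by
    ext t
    simp only [mem_setOf_eq, mem_Ici]
    constructor
    · intro h
      by_contra hlt
      push_neg at hlt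
      exact absurd h (ENNReal.add_ne_top.mpr ⟨(hΦlt t hlt).ne, (hgfin t hlt).ne⟩)
    · intro h
      have : g t = ⊤ := top_le_iff.mp (hgb ▸ hgmono h)
      simp [hΨdef, this]
  have hΨinf : sInf {t : ℝ≥0∞ | Ψ t = ⊤} = b := by rw [hΨset]; exact csInf_Ici
  refine ⟨Ψ, ⟨?_, ?_, ?_, ?_, ?_, ?_, ?_⟩, hΨinf, ?_, ?_⟩
  · exact hmono.add hgmono
  · simp [hΨdef, h0, hg0 0 (zero_le)]
  · simp [hΨdef, htop]
  · intro x y a b2 hab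
    have hΦc := hconv x y a b2 hab
    have hgc : g (a * x + b2 * y) ≤ a * g x + b2 * g y := by
      refine iSup_le fun n => ?_
      refine le_trans (ell_convex _ _ x y a b2 hab) ?_
      exact add_le_add (mul_le_mul_right (le_iSup _ n) a) (mul_le_mul_right (le_iSup _ n) b2)
    calc Ψ (a * x + b2 * y) ≤ (a * Φ x + b2 * Φ y) + (a * g x + b2 * g y) := add_le_add hΦc hgc
      _ = a * Ψ x + b2 * Ψ y := by simp only [hΨdef]; ring
  · exact fun t ht => (hcont t ht).add (hgcont t ht)
  · refine ⟨(δ : ℝ≥0∞) * b, ?_, ?_⟩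
    · exact ENNReal.mul_pos (by exact_mod_cast hδ0.ne') hbpos.ne'
    · have hlt : (δ : ℝ≥0∞) * b < b := by
        calc (δ : ℝ≥0∞) * b < 1 * b :=
            ENNReal.mul_lt_mul_left hbpos.ne' hbne (by exact_mod_cast hδ1)
          _ = b := one_mul b
      have : Ψ ((δ : ℝ≥0∞) * b) = Φ ((δ : ℝ≥0∞) * b) := by
        simp [hΨdef, hg0 _ le_rfl]
      rw [this]
      exact hΦlt _ hlt
  · exact ⟨t1, ht1fin, lt_of_lt_of_le ht1pos (le_add_of_nonneg_right (zero_le))⟩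
  · have hmem : b ∈ {t : ℝ≥0∞ | Ψ t = ⊤} := hΨset ▸ self_mem_Ici
    rw [hΨinf]
    exact hmem
  · intro t htne
    constructor
    · rcases le_or_gt t b with h | h
      · have hg' : g ((δ : ℝ≥0∞) * t) = 0 := hg0 _ (mul_le_mul_right h _)
        calc Ψ ((δ : ℝ≥0∞) * t) = Φ ((δ : ℝ≥0∞) * t) := by simp [hΨdef, hg']
          _ ≤ Φ t := hmono (by
              calc (δ : ℝ≥0∞) * t ≤ 1 * t := mul_le_mul_left (by exact_mod_cast hδ1.le) t
                _ = t := one_mul t)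
      · rw [hΦtop t h]; exact le_top
    · exact le_add_of_nonneg_right (zero_le)
end

section
/- Let Φ be a Young function satisfying the ∇₂-condition. Then there exists a constant C_Φ > 0 such that for all locally integrable f on ℝⁿ, sup_{t ∈ (0,∞)} Φ(t) |{x : Mf(x) > t}| ≤ sup_{t ∈ (0,∞)} Φ(t) |{x : C_Φ |f(x)| > t}|, where M is the Hardy–Littlewood maximal operator. (Weak-weak type modular inequality.) -/
open MeasureTheory ENNReal NNReal Metric Set Filter Topology

/-- Hardy–Littlewood maximal operator (for real-valued functions). -/
noncomputable def maxOpR {d : ℕ} (f : EuclideanSpace ℝ (Fin d) → ℝ)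
    (x : EuclideanSpace ℝ (Fin d)) : ℝ≥0∞ :=
  ⨆ (a : EuclideanSpace ℝ (Fin d)) (r : ℝ) (_ : 0 < r) (_ : x ∈ ball a r),
    (volume (ball a r))⁻¹ * ∫⁻ y in ball a r, ENNReal.ofReal |f y|

lemma weak11 {d : ℕ} (g : EuclideanSpace ℝ (Fin d) → ℝ) {t : ℝ≥0∞} (ht : 0 < t) (ht' : t ≠ ⊤) :
    t * volume {x | t < maxOpR g x} ≤ (5:ℝ≥0∞)^d * ∫⁻ y, ENNReal.ofReal |g y| := by
  classical
  set I := ∫⁻ y, ENNReal.ofReal |g y| with hIdef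
  by_cases hItop : I = ⊤
  · rw [hItop, ENNReal.mul_top (pow_ne_zero _ (by norm_num))]; exact le_top
  set T := {x | t < maxOpR g x} with hTdef
  have H : ∀ x ∈ T, ∃ a : EuclideanSpace ℝ (Fin d), ∃ ρ : ℝ, 0 < ρ ∧ x ∈ ball a ρ ∧
      t < (volume (ball a ρ))⁻¹ * ∫⁻ y in ball a ρ, ENNReal.ofReal |g y| := by
    intro x hx
    have hx' : t < maxOpR g x := hx
    simp only [maxOpR, lt_iSup_iff] at hx'
    obtain ⟨a, r, hr, hmem, hlt⟩ := hx'
    exact ⟨a, r, hr, hmem, hlt⟩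
  choose! a ρ hρ hmem havg using H
  have key : ∀ x ∈ T, t * volume (ball (a x) (ρ x)) ≤
      ∫⁻ y in ball (a x) (ρ x), ENNReal.ofReal |g y| := by
    intro x hx
    have v0 : volume (ball (a x) (ρ x)) ≠ 0 := (measure_ball_pos volume _ (hρ x hx)).ne'
    have vt : volume (ball (a x) (ρ x)) ≠ ⊤ := measure_ball_lt_top.ne
    calc t * volume (ball (a x) (ρ x))
        ≤ ((volume (ball (a x) (ρ x)))⁻¹ * ∫⁻ y in ball (a x) (ρ x), ENNReal.ofReal |g y|) *
            volume (ball (a x) (ρ x)) := mul_le_mul_left (havg x hx).le _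
      _ = _ := by
          rw [mul_right_comm, ENNReal.inv_mul_cancel v0 vt, one_mul]
  have vol_le : ∀ x ∈ T, volume (ball (a x) (ρ x)) ≤ I / t := by
    intro x hx
    refine (ENNReal.le_div_iff_mul_le (Or.inl ht.ne') (Or.inl ht')).2 ?_
    rw [mul_comm]
    exact (key x hx).trans (setLIntegral_le_lintegral _ _)
  have vol_le' : ∀ x ∈ T, volume (ball (a x) (ρ x)) ≤
      t⁻¹ * ∫⁻ y in ball (a x) (ρ x), ENNReal.ofReal |g y| := by
    intro x hx
    calc volume (ball (a x) (ρ x))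
        = t⁻¹ * (t * volume (ball (a x) (ρ x))) := by
          rw [← mul_assoc, ENNReal.inv_mul_cancel ht.ne' ht', one_mul]
      _ ≤ _ := mul_le_mul_right (key x hx) _
  rcases Nat.eq_zero_or_pos d with hd | hd
  · subst hd
    haveI : Subsingleton (EuclideanSpace ℝ (Fin 0)) := ⟨fun x y => by ext i; exact i.elim0⟩
    rcases eq_empty_or_nonempty T with hTe | ⟨x, hx⟩
    · rw [hTe]; simp
    · have hsub : T ⊆ ball (a x) (ρ x) := fun y _ => by
        rw [Subsingleton.elim y x]; exact hmem x hx
      calc t * volume T ≤ t * volume (ball (a x) (ρ x)) :=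
            mul_le_mul_right (measure_mono hsub) _
        _ ≤ t * (I / t) := mul_le_mul_right (vol_le x hx) _
        _ ≤ I := ENNReal.mul_div_le
        _ ≤ (5:ℝ≥0∞)^0 * I := by simp
  · have hIt : I / t ≠ ⊤ := (ENNReal.div_lt_top hItop ht.ne').ne
    have u10 : volume (ball (0 : EuclideanSpace ℝ (Fin d)) 1) ≠ 0 :=
      (measure_ball_pos volume _ one_pos).ne'
    have u1t : volume (ball (0 : EuclideanSpace ℝ (Fin d)) 1) ≠ ⊤ := measure_ball_lt_top.ne
    have hWt : I / t / volume (ball (0 : EuclideanSpace ℝ (Fin d)) 1) ≠ ⊤ :=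
      (ENNReal.div_lt_top hIt u10).ne
    have hball : ∀ x ∈ T, volume (ball (a x) (ρ x)) =
        ENNReal.ofReal (ρ x ^ d) * volume (ball (0 : EuclideanSpace ℝ (Fin d)) 1) := by
      intro x hx
      rw [Measure.addHaar_ball_of_pos volume _ (hρ x hx), finrank_euclideanSpace_fin]
    have hrad : ∀ x ∈ T, ρ x ≤ max 1 (I / t / volume (ball (0 : EuclideanSpace ℝ (Fin d)) 1)).toReal := by
      intro x hx
      have h1 : ENNReal.ofReal (ρ x ^ d) * volume (ball (0 : EuclideanSpace ℝ (Fin d)) 1) ≤ I / t := by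
        rw [← hball x hx]; exact vol_le x hx
      have h2 : ENNReal.ofReal (ρ x ^ d) ≤ I / t / volume (ball (0 : EuclideanSpace ℝ (Fin d)) 1) :=
        (ENNReal.le_div_iff_mul_le (Or.inl u10) (Or.inl u1t)).2 h1
      have h3 : ρ x ^ d ≤ (I / t / volume (ball (0 : EuclideanSpace ℝ (Fin d)) 1)).toReal := by
        have := ENNReal.toReal_mono hWt h2
        rwa [ENNReal.toReal_ofReal (pow_nonneg (hρ x hx).le _)] at this
      rcases le_total (ρ x) 1 with h | h
      · exact h.trans (le_max_left _ _)
      · exact le_trans (le_trans (le_self_pow₀ h hd.ne') h3) (le_max_right _ _)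
    obtain ⟨u, uT, udisj, hcov⟩ := Vitali.exists_disjoint_subfamily_covering_enlargement_closedBall
      T a ρ _ hrad 5 (by norm_num)
    have hcount : u.Countable := udisj.countable_of_nonempty_interior fun b hb =>
      ⟨a b, ball_subset_interior_closedBall (mem_ball_self (hρ b (uT hb)))⟩
    have hTcov : T ⊆ ⋃ b ∈ u, closedBall (a b) (5 * ρ b) := by
      intro x hx
      obtain ⟨b, hb, hsub⟩ := hcov x hx
      exact mem_biUnion hb (hsub (ball_subset_closedBall (hmem x hx)))
    haveI := hcount.to_subtype
    have hdisj' : Pairwise (Function.onFun Disjoint fun b : u => ball (a b.1) (ρ b.1)) := fun i j hij =>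
      ((udisj.subtype _ _) hij).mono ball_subset_closedBall ball_subset_closedBall
    have sum_int : ∑' b : u, ∫⁻ y in ball (a b.1) (ρ b.1), ENNReal.ofReal |g y| ≤ I := by
      rw [← lintegral_iUnion (fun b => measurableSet_ball) hdisj']
      exact setLIntegral_le_lintegral _ _
    have hbig : ∀ b : u, volume (closedBall (a b.1) (5 * ρ b.1)) ≤
        ENNReal.ofReal (5^d) * (t⁻¹ * ∫⁻ y in ball (a b.1) (ρ b.1), ENNReal.ofReal |g y|) := by
      intro b
      have hbT : (b : EuclideanSpace ℝ (Fin d)) ∈ T := uT b.2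
      have hbρ : 0 < ρ b.1 := hρ b.1 hbT
      have e1 : volume (closedBall (a b.1) (5 * ρ b.1)) =
          ENNReal.ofReal (5^d) * volume (ball (a b.1) (ρ b.1)) := by
        rw [Measure.addHaar_closedBall volume _ (by positivity), finrank_euclideanSpace_fin,
          mul_pow, ENNReal.ofReal_mul (by positivity), mul_assoc, ← hball b.1 hbT]
      rw [e1]
      exact mul_le_mul_right (vol_le' b.1 hbT) _
    have c5 : ENNReal.ofReal ((5:ℝ)^d) = (5:ℝ≥0∞)^d := by
      rw [ENNReal.ofReal_pow (by norm_num)]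
      norm_num
    calc t * volume T
        ≤ t * ∑' b : u, volume (closedBall (a b.1) (5 * ρ b.1)) :=
          mul_le_mul_right ((measure_mono hTcov).trans (measure_biUnion_le volume hcount _)) _
      _ ≤ t * ∑' b : u, ENNReal.ofReal (5^d) *
            (t⁻¹ * ∫⁻ y in ball (a b.1) (ρ b.1), ENNReal.ofReal |g y|) :=
          mul_le_mul_right (ENNReal.tsum_le_tsum hbig) _
      _ = ENNReal.ofReal (5^d) * (t * t⁻¹) *
            ∑' b : u, ∫⁻ y in ball (a b.1) (ρ b.1), ENNReal.ofReal |g y| := by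
          rw [ENNReal.tsum_mul_left, ENNReal.tsum_mul_left]
          ring
      _ ≤ ENNReal.ofReal (5^d) * 1 * I := by
          gcongr
          exact ENNReal.mul_inv_le_one t
      _ = (5:ℝ≥0∞)^d * I := by rw [mul_one, c5]

lemma maxOpR_trunc {d : ℕ} (f : EuclideanSpace ℝ (Fin d) → ℝ) (t : ℝ≥0∞)
    (x : EuclideanSpace ℝ (Fin d)) :
    maxOpR f x ≤ maxOpR ({y | t/2 < ENNReal.ofReal |f y|}.indicator f) x + t/2 := by
  set E := {y | t/2 < ENNReal.ofReal |f y|} with hE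
  refine iSup_le fun a => iSup_le fun r => iSup_le fun hr => iSup_le fun hx => ?_
  have v0 : volume (ball a r) ≠ 0 := (measure_ball_pos volume _ hr).ne'
  have vt : volume (ball a r) ≠ ⊤ := measure_ball_lt_top.ne
  have hpt : ∀ y, ENNReal.ofReal |f y| ≤ ENNReal.ofReal |E.indicator f y| + t/2 := by
    intro y
    by_cases hy : y ∈ E
    · rw [Set.indicator_of_mem hy]; exact le_self_add
    · rw [Set.indicator_of_notMem hy]
      simp only [hE, mem_setOf_eq, not_lt] at hy
      simpa using hy
  calc (volume (ball a r))⁻¹ * ∫⁻ y in ball a r, ENNReal.ofReal |f y|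
      ≤ (volume (ball a r))⁻¹ * ∫⁻ y in ball a r,
          (ENNReal.ofReal |E.indicator f y| + t/2) :=
        mul_le_mul_right (lintegral_mono fun y => hpt y) _
    _ = (volume (ball a r))⁻¹ * ((∫⁻ y in ball a r, ENNReal.ofReal |E.indicator f y|)
          + t/2 * volume (ball a r)) := by
        rw [lintegral_add_right _ measurable_const, setLIntegral_const]
    _ = (volume (ball a r))⁻¹ * (∫⁻ y in ball a r, ENNReal.ofReal |E.indicator f y|)
          + t/2 * ((volume (ball a r))⁻¹ * volume (ball a r)) := by ring
    _ ≤ maxOpR (E.indicator f) x + t/2 := by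
        refine add_le_add ?_ ?_
        · exact le_iSup_of_le a (le_iSup_of_le r (le_iSup_of_le hr (le_iSup_of_le hx le_rfl)))
        · rw [ENNReal.inv_mul_cancel v0 vt, mul_one]

lemma core {d : ℕ} (Φ : ℝ≥0∞ → ℝ≥0∞) (k : ℝ≥0) (hk1 : 1 < k)
    (hΦk : ∀ t : ℝ≥0∞, 0 < t → Φ t ≤ Φ ((k : ℝ≥0∞) * t) / (2 * (k : ℝ≥0∞)))
    (m : ℕ) (hm : 2 * (5:ℝ≥0∞)^d * (k:ℝ≥0∞) ≤ (2*(k:ℝ≥0∞))^m)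
    (g : EuclideanSpace ℝ (Fin d) → ℝ) (hgm : Measurable g)
    {t : ℝ≥0∞} (ht0 : 0 < t) (htt : t < ⊤) :
    Φ t * volume {x | t < maxOpR g x} ≤
      ⨆ u ∈ Set.Ioo (0 : ℝ≥0∞) ⊤, Φ u * volume {x | u < 2 * (k:ℝ≥0∞)^m * ENNReal.ofReal |g x|} := by
  classical
  set κ : ℝ≥0∞ := (k : ℝ≥0∞) with hκdef
  have hκ1 : 1 < κ := by simp only [hκdef]; exact_mod_cast hk1
  have hκ0 : κ ≠ 0 := (zero_lt_one.trans hκ1).ne'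
  have hκt : κ ≠ ⊤ := ENNReal.coe_ne_top
  have h2κ0 : (2*κ) ≠ 0 := mul_ne_zero (by norm_num) hκ0
  have h2κt : (2*κ) ≠ ⊤ := ENNReal.mul_ne_top (by norm_num) hκt
  have hC0 : (2*κ^m) ≠ 0 := mul_ne_zero (by norm_num) (pow_ne_zero _ hκ0)
  have hCt : (2*κ^m) ≠ ⊤ := ENNReal.mul_ne_top (by norm_num) (pow_ne_top hκt)
  -- ∇₂ iteration
  have iter : ∀ (n : ℕ) (s : ℝ≥0∞), 0 < s → (2*κ)^n * Φ s ≤ Φ (κ^n * s) := by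
    intro n
    induction n with
    | zero => intro s _; simp
    | succ n ih =>
      intro s hs
      have hs' : 0 < κ^n * s := ENNReal.mul_pos (pow_ne_zero _ hκ0) hs.ne'
      have h1 : (2*κ) * Φ (κ^n * s) ≤ Φ (κ * (κ^n * s)) := by
        have h2 := hΦk (κ^n * s) hs'
        rw [ENNReal.le_div_iff_mul_le (Or.inl h2κ0) (Or.inl h2κt)] at h2
        calc (2*κ) * Φ (κ^n*s) = Φ (κ^n*s) * (2*κ) := mul_comm _ _
          _ ≤ Φ (κ * (κ^n * s)) := h2
      calc (2*κ)^(n+1) * Φ s = (2*κ) * ((2*κ)^n * Φ s) := by ring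
        _ ≤ (2*κ) * Φ (κ^n * s) := mul_le_mul_right (ih s hs) _
        _ ≤ Φ (κ * (κ^n * s)) := h1
        _ = Φ (κ^(n+1) * s) := by rw [← mul_assoc, ← pow_succ']
  set c : ℝ≥0∞ := t/2 with hcdef
  have hc0 : c ≠ 0 := by
    simp [hcdef, ENNReal.div_eq_zero_iff, ht0.ne']
  have hct : c ≠ ⊤ := (ENNReal.div_lt_top htt.ne (by norm_num)).ne
  have hcc : (2:ℝ≥0∞) * c = t := ENNReal.mul_div_cancel' (by norm_num) (by norm_num)
  set h : EuclideanSpace ℝ (Fin d) → ℝ≥0∞ := fun y => ENNReal.ofReal |g y| with hhdef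
  have hh : Measurable h := (hgm.abs).ennreal_ofReal
  set E : Set (EuclideanSpace ℝ (Fin d)) := {y | c < h y} with hEdef
  have hE : MeasurableSet E := measurableSet_lt measurable_const hh
  -- Step B : truncation
  have step1 : {x | t < maxOpR g x} ⊆ {x | c < maxOpR (E.indicator g) x} := by
    intro x hx
    have h1 : t < maxOpR (E.indicator g) x + c := lt_of_lt_of_le hx (maxOpR_trunc g t x)
    have h2 : c + c < maxOpR (E.indicator g) x + c := by
      rw [hcdef] at h1 ⊢
      rwa [ENNReal.add_halves t]
    exact (ENNReal.add_lt_add_iff_right hct).1 h2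
  -- Step A : weak (1,1) for the truncation
  have hint : (∫⁻ y, ENNReal.ofReal |E.indicator g y|) = ∫⁻ y in E, h y := by
    rw [← lintegral_indicator hE]
    refine lintegral_congr fun y => ?_
    by_cases hy : y ∈ E <;> simp [hhdef, hy]
  have step2 : volume {x | c < maxOpR (E.indicator g) x} ≤
      c⁻¹ * ((5:ℝ≥0∞)^d * ∫⁻ y in E, h y) := by
    have w := weak11 (E.indicator g) (d := d) (pos_iff_ne_zero.2 hc0) hct
    rw [hint] at w
    calc volume {x | c < maxOpR (E.indicator g) x}
        = c⁻¹ * (c * volume {x | c < maxOpR (E.indicator g) x}) := by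
          rw [← mul_assoc, ENNReal.inv_mul_cancel hc0 hct, one_mul]
      _ ≤ _ := mul_le_mul_right w _
  -- decomposition of E
  set A : ℕ → Set (EuclideanSpace ℝ (Fin d)) :=
    fun n => {y | κ^n * c < h y} ∩ {y | h y ≤ κ^(n+1) * c} with hAdef
  have hAmeas : ∀ n, MeasurableSet (A n) := fun n =>
    (measurableSet_lt measurable_const hh).inter (measurableSet_le hh measurable_const)
  have mono_a : ∀ {i j : ℕ}, i ≤ j → κ^i * c ≤ κ^j * c := fun hij =>
    mul_le_mul_left (pow_le_pow_right' hκ1.le hij) _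
  have hdisj : ∀ {i j : ℕ}, i < j → Disjoint (A i) (A j) := by
    intro i j hij
    refine Set.disjoint_left.2 fun y hyi hyj => ?_
    exact absurd hyj.1 (not_lt.2 (hyi.2.trans (mono_a hij)))
  have hAdisj : Pairwise (Function.onFun Disjoint A) := by
    intro i j hij
    rcases lt_or_gt_of_ne hij with hlt | hgt
    · exact hdisj hlt
    · exact (hdisj hgt).symm
  have hEcov : E ⊆ ⋃ n, A n := by
    intro y hy
    have hcv : c < h y := hy
    have hvt : h y < ⊤ := ENNReal.ofReal_lt_top
    have hex : ∃ n, h y ≤ κ^(n+1) * c := by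
      obtain ⟨n, hn⟩ := pow_unbounded_of_one_lt ((h y / c).toNNReal) hk1
      have h1 : h y / c < κ^n := by
        have hne : h y / c ≠ ⊤ := (ENNReal.div_lt_top hvt.ne hc0).ne
        calc h y / c = (((h y / c).toNNReal : ℝ≥0) : ℝ≥0∞) := (ENNReal.coe_toNNReal hne).symm
          _ < ((k^n : ℝ≥0) : ℝ≥0∞) := by exact_mod_cast hn
          _ = κ^n := by push_cast; rfl
      have h2 : h y < κ^n * c := by
        rwa [ENNReal.div_lt_iff (Or.inl hc0) (Or.inl hct)] at h1
      exact ⟨n, h2.le.trans (mono_a (Nat.le_succ n))⟩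
    refine mem_iUnion.2 ⟨Nat.find hex, ?_, Nat.find_spec hex⟩
    show κ ^ (Nat.find hex) * c < h y
    rcases Nat.eq_zero_or_pos (Nat.find hex) with h0 | hpos
    · rw [h0]; simpa using hcv
    · obtain ⟨M, hM⟩ := Nat.exists_eq_succ_of_ne_zero hpos.ne'
      have hmin : ¬ h y ≤ κ ^ (M+1) * c := Nat.find_min hex (by omega)
      rw [hM]
      exact not_le.1 hmin
  -- per piece
  have hpiece : ∀ n, ∫⁻ y in A n, h y ≤ (κ^(n+1) * c) * volume (A n) := by
    intro n
    calc ∫⁻ y in A n, h y ≤ ∫⁻ _ in A n, (κ^(n+1) * c) :=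
          setLIntegral_mono' (hAmeas n) fun y hy => hy.2
      _ = (κ^(n+1) * c) * volume (A n) := setLIntegral_const _ _
  have hsub : ∀ n, A n ⊆ {x | κ^(n+m) * t < 2 * κ^m * h x} := by
    intro n y hy
    have h1 : κ^n * c < h y := hy.1
    have h2 : 2 * κ^m * (κ^n * c) < 2 * κ^m * h y :=
      ENNReal.mul_lt_mul_right hC0 hCt h1
    have h3 : 2 * κ^m * (κ^n * c) = κ^(n+m) * t := by
      rw [← hcc, pow_add]; ring
    rwa [h3] at h2
  have hΦt : ∀ n : ℕ, Φ t ≤ ((2*κ)^(n+m))⁻¹ * Φ (κ^(n+m) * t) := by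
    intro n
    calc Φ t = ((2*κ)^(n+m))⁻¹ * ((2*κ)^(n+m) * Φ t) := by
          rw [← mul_assoc, ENNReal.inv_mul_cancel (pow_ne_zero _ h2κ0) (pow_ne_top h2κt), one_mul]
      _ ≤ _ := mul_le_mul_right (iter (n+m) t ht0) _
  set S := ⨆ u ∈ Set.Ioo (0 : ℝ≥0∞) ⊤, Φ u * volume {x | u < 2 * κ^m * h x} with hSdef
  have hterm : ∀ n : ℕ, Φ (κ^(n+m) * t) * volume {x | κ^(n+m) * t < 2 * κ^m * h x} ≤ S := by
    intro n
    have hu : κ^(n+m) * t ∈ Set.Ioo (0:ℝ≥0∞) ⊤ :=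
      ⟨ENNReal.mul_pos (pow_ne_zero _ hκ0) ht0.ne',
        mul_lt_top (lt_top_iff_ne_top.2 (pow_ne_top hκt)) htt⟩
    exact le_biSup (fun u => Φ u * volume {x | u < 2 * κ ^ m * h x}) hu
  -- assemble
  have main : Φ t * volume {x | t < maxOpR g x} ≤
      ∑' n : ℕ, ((5:ℝ≥0∞)^d * κ^(n+1) * ((2*κ)^(n+m))⁻¹) * S := by
    calc Φ t * volume {x | t < maxOpR g x}
        ≤ Φ t * (c⁻¹ * ((5:ℝ≥0∞)^d * ∫⁻ y in E, h y)) :=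
          mul_le_mul_right ((measure_mono step1).trans step2) _
      _ ≤ Φ t * (c⁻¹ * ((5:ℝ≥0∞)^d * ∑' n : ℕ, (κ^(n+1) * c) * volume (A n))) := by
          refine mul_le_mul_right (mul_le_mul_right (mul_le_mul_right ?_ _) _) _
          calc ∫⁻ y in E, h y ≤ ∫⁻ y in ⋃ n, A n, h y := lintegral_mono_set hEcov
            _ = ∑' n : ℕ, ∫⁻ y in A n, h y := lintegral_iUnion hAmeas hAdisj _
            _ ≤ ∑' n : ℕ, (κ^(n+1) * c) * volume (A n) := ENNReal.tsum_le_tsum hpiece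
      _ = ∑' n : ℕ, ((5:ℝ≥0∞)^d * κ^(n+1)) * (c⁻¹ * c) * (Φ t * volume (A n)) := by
          rw [← ENNReal.tsum_mul_left, ← ENNReal.tsum_mul_left, ← ENNReal.tsum_mul_left]
          exact tsum_congr fun n => by ring
      _ = ∑' n : ℕ, ((5:ℝ≥0∞)^d * κ^(n+1)) * (Φ t * volume (A n)) := by
          refine tsum_congr fun n => ?_
          rw [ENNReal.inv_mul_cancel hc0 hct, mul_one]
      _ ≤ ∑' n : ℕ, ((5:ℝ≥0∞)^d * κ^(n+1) * ((2*κ)^(n+m))⁻¹) * S := by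
          refine ENNReal.tsum_le_tsum fun n => ?_
          have hb : Φ t * volume (A n) ≤
              ((2*κ)^(n+m))⁻¹ * (Φ (κ^(n+m) * t) * volume {x | κ^(n+m) * t < 2 * κ^m * h x}) := by
            calc Φ t * volume (A n)
                ≤ (((2*κ)^(n+m))⁻¹ * Φ (κ^(n+m) * t)) * volume {x | κ^(n+m) * t < 2 * κ^m * h x} :=
                  mul_le_mul' (hΦt n) (measure_mono (hsub n))
              _ = _ := by ring
          calc ((5:ℝ≥0∞)^d * κ^(n+1)) * (Φ t * volume (A n))
              ≤ ((5:ℝ≥0∞)^d * κ^(n+1)) * (((2*κ)^(n+m))⁻¹ *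
                  (Φ (κ^(n+m) * t) * volume {x | κ^(n+m) * t < 2 * κ^m * h x})) :=
                mul_le_mul_right hb _
            _ ≤ ((5:ℝ≥0∞)^d * κ^(n+1)) * (((2*κ)^(n+m))⁻¹ * S) :=
                mul_le_mul_right (mul_le_mul_right (hterm n) _) _
            _ = ((5:ℝ≥0∞)^d * κ^(n+1) * ((2*κ)^(n+m))⁻¹) * S := by ring
  -- coefficient computation
  have c_n_eq : ∀ n : ℕ, (5:ℝ≥0∞)^d * κ^(n+1) * ((2*κ)^(n+m))⁻¹ =
      ((5:ℝ≥0∞)^d * κ * ((2*κ)^m)⁻¹) * (2⁻¹)^n := by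
    intro n
    have e1 : ((2*κ)^(n+m) : ℝ≥0∞)⁻¹ = ((2*κ)^n)⁻¹ * ((2*κ)^m)⁻¹ := by
      rw [pow_add, ENNReal.mul_inv (Or.inl (pow_ne_zero _ h2κ0)) (Or.inl (pow_ne_top h2κt))]
    have e2 : (((2:ℝ≥0∞)*κ)^n)⁻¹ = (2^n)⁻¹ * (κ^n)⁻¹ := by
      rw [mul_pow, ENNReal.mul_inv (Or.inl (pow_ne_zero _ (by norm_num : (2:ℝ≥0∞) ≠ 0)))
        (Or.inr (pow_ne_zero _ hκ0))]
    have e4 : (((2:ℝ≥0∞))^n)⁻¹ = (2⁻¹)^n := ENNReal.inv_pow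
    calc (5:ℝ≥0∞)^d * κ^(n+1) * ((2*κ)^(n+m))⁻¹
        = ((5:ℝ≥0∞)^d * κ * ((2*κ)^m)⁻¹) * ((κ^n * (κ^n)⁻¹) * (2⁻¹)^n) := by
          rw [e1, e2, e4, pow_succ]; ring
      _ = ((5:ℝ≥0∞)^d * κ * ((2*κ)^m)⁻¹) * (2⁻¹)^n := by
          rw [ENNReal.mul_inv_cancel (pow_ne_zero _ hκ0) (pow_ne_top hκt), one_mul]
  have sum_eq : ∑' n : ℕ, ((5:ℝ≥0∞)^d * κ^(n+1) * ((2*κ)^(n+m))⁻¹) * S =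
      (((5:ℝ≥0∞)^d * κ * ((2*κ)^m)⁻¹) * 2) * S := by
    calc ∑' n : ℕ, ((5:ℝ≥0∞)^d * κ^(n+1) * ((2*κ)^(n+m))⁻¹) * S
        = ∑' n : ℕ, (((5:ℝ≥0∞)^d * κ * ((2*κ)^m)⁻¹) * S) * (2⁻¹)^n := by
          exact tsum_congr fun n => by rw [c_n_eq n]; ring
      _ = (((5:ℝ≥0∞)^d * κ * ((2*κ)^m)⁻¹) * S) * ∑' n : ℕ, ((2⁻¹ : ℝ≥0∞))^n :=
          ENNReal.tsum_mul_left
      _ = _ := by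
          rw [ENNReal.tsum_geometric, ENNReal.one_sub_inv_two, inv_inv]; ring
  have coef : ((5:ℝ≥0∞)^d * κ * ((2*κ)^m)⁻¹) * 2 ≤ 1 := by
    calc ((5:ℝ≥0∞)^d * κ * ((2*κ)^m)⁻¹) * 2 = (2 * (5:ℝ≥0∞)^d * κ) * ((2*κ)^m)⁻¹ := by ring
      _ ≤ (2*κ)^m * ((2*κ)^m)⁻¹ := mul_le_mul_left hm _
      _ = 1 := ENNReal.mul_inv_cancel (pow_ne_zero _ h2κ0) (pow_ne_top h2κt)
  calc Φ t * volume {x | t < maxOpR g x}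
      ≤ ∑' n : ℕ, ((5:ℝ≥0∞)^d * κ^(n+1) * ((2*κ)^(n+m))⁻¹) * S := main
    _ = (((5:ℝ≥0∞)^d * κ * ((2*κ)^m)⁻¹) * 2) * S := sum_eq
    _ ≤ 1 * S := mul_le_mul_left coef _
    _ = S := one_mul _


/-- Weak-weak type modular inequality for the Hardy–Littlewood maximal operator. -/
theorem stmt8 {d : ℕ} (Φ : ℝ≥0∞ → ℝ≥0∞) (hΦ : IsYoung Φ) (hN : Nabla2 Φ) :
    ∃ C : ℝ≥0∞, 0 < C ∧ C ≠ ⊤ ∧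
      ∀ f : EuclideanSpace ℝ (Fin d) → ℝ, LocallyIntegrable f volume →
        (⨆ t ∈ Set.Ioo (0 : ℝ≥0∞) ⊤, Φ t * volume {x | t < maxOpR f x}) ≤
          ⨆ t ∈ Set.Ioo (0 : ℝ≥0∞) ⊤, Φ t * volume {x | t < C * ENNReal.ofReal |f x|} := by
  obtain ⟨k, hk1, hΦk⟩ := hN
  have hκ1 : (1:ℝ≥0∞) < (k:ℝ≥0∞) := by exact_mod_cast hk1
  have hκ0 : (k:ℝ≥0∞) ≠ 0 := (zero_lt_one.trans hκ1).ne'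
  have hκt : (k:ℝ≥0∞) ≠ ⊤ := ENNReal.coe_ne_top
  obtain ⟨m, hm⟩ : ∃ m : ℕ, 2 * (5:ℝ≥0∞)^d * (k:ℝ≥0∞) ≤ (2*(k:ℝ≥0∞))^m := by
    have hfin : (2 * (5:ℝ≥0∞)^d * (k:ℝ≥0∞)) ≠ ⊤ :=
      ENNReal.mul_ne_top (ENNReal.mul_ne_top (by norm_num) (pow_ne_top (by norm_num))) hκt
    obtain ⟨n, hn⟩ := ENNReal.exists_nat_gt hfin
    refine ⟨n, hn.le.trans ?_⟩
    calc ((n:ℝ≥0∞)) ≤ ((2^n : ℕ) : ℝ≥0∞) := by exact_mod_cast (Nat.lt_two_pow_self (n := n)).le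
      _ = (2:ℝ≥0∞)^n := by push_cast; ring
      _ ≤ (2*(k:ℝ≥0∞))^n := by
          refine pow_le_pow_left' ?_ n
          calc (2:ℝ≥0∞) = 2 * 1 := (mul_one _).symm
            _ ≤ 2 * (k:ℝ≥0∞) := mul_le_mul_right hκ1.le _
  refine ⟨2 * (k:ℝ≥0∞)^m, ?_, ?_, ?_⟩
  · exact ENNReal.mul_pos (by norm_num) (pow_ne_zero _ hκ0)
  · exact ENNReal.mul_ne_top (by norm_num) (pow_ne_top hκt)
  intro f hf
  have hae : AEMeasurable f volume := hf.aestronglyMeasurable.aemeasurable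
  have hgm : Measurable (hae.mk f) := hae.measurable_mk
  have hfg : f =ᵐ[volume] hae.mk f := hae.ae_eq_mk
  have hM : maxOpR f = maxOpR (hae.mk f) := by
    funext x
    simp only [maxOpR]
    refine iSup_congr fun a => iSup_congr fun r => iSup_congr fun _ => iSup_congr fun _ => ?_
    congr 1
    exact lintegral_congr_ae (ae_restrict_of_ae (hfg.mono fun y hy => by simp only [hy]))
  have hsets : ∀ u : ℝ≥0∞, volume {x | u < 2 * (k:ℝ≥0∞)^m * ENNReal.ofReal |f x|} =
      volume {x | u < 2 * (k:ℝ≥0∞)^m * ENNReal.ofReal |hae.mk f x|} := by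
    intro u
    apply measure_congr
    filter_upwards [hfg] with x hx
    change (u < 2 * (k:ℝ≥0∞)^m * ENNReal.ofReal |f x|) =
      (u < 2 * (k:ℝ≥0∞)^m * ENNReal.ofReal |hae.mk f x|)
    rw [hx]
  calc (⨆ t ∈ Set.Ioo (0 : ℝ≥0∞) ⊤, Φ t * volume {x | t < maxOpR f x})
      = ⨆ t ∈ Set.Ioo (0 : ℝ≥0∞) ⊤, Φ t * volume {x | t < maxOpR (hae.mk f) x} := by
        rw [hM]
    _ ≤ ⨆ t ∈ Set.Ioo (0 : ℝ≥0∞) ⊤, Φ t *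
          volume {x | t < 2 * (k:ℝ≥0∞)^m * ENNReal.ofReal |hae.mk f x|} := by
        refine iSup_le fun t => iSup_le fun ht => ?_
        exact core Φ k hk1 hΦk m hm (hae.mk f) hgm ht.1 ht.2
    _ = ⨆ t ∈ Set.Ioo (0 : ℝ≥0∞) ⊤, Φ t *
          volume {x | t < 2 * (k:ℝ≥0∞)^m * ENNReal.ofReal |f x|} := by
        refine iSup_congr fun t => iSup_congr fun _ => ?_
        rw [hsets t]
end

section
/- Let ρ : (0,∞) → (0,∞) satisfy sup_{r ≤ t ≤ 2r} ρ(t) ≤ C ∫_{K₁r}^{K₂r} ρ(t)/t dt for all r > 0 (with constants 0 < K₁ < K₂), and define ρ̃(r) = ∫_{K₁r}^{K₂r} ρ(t)/t dt. Then there is a constant C' such that for all r ∈ (0,∞): Σ_{j=-∞}^{-1} ρ̃(2ʲr) ≤ C' ∫_0^{K₂r} ρ(t)/t dt; moreover, if τ : (0,∞) → (0,∞) satisfies the doubling condition, then Σ_{j=0}^{∞} ρ̃(2ʲr) τ(2ʲr) ≤ C' ∫_{K₁r}^{∞} ρ(t)τ(t)/t dt. -/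
open MeasureTheory ENNReal NNReal Metric Set Filter Topology

/-- `ρ̃(r) = ∫_{K₁r}^{K₂r} ρ(t)/t dt`. -/
noncomputable def rhoTilde (ρ : ℝ → ℝ≥0∞) (K₁ K₂ r : ℝ) : ℝ≥0∞ :=
  ∫⁻ t in Set.Ioc (K₁ * r) (K₂ * r), ρ t / ENNReal.ofReal t

/-- Bounded-overlap lemma: if each `S j` sits in `T` and indices at distance `≥ N`
give disjoint sets, the sum of integrals is at most `N` times the integral over `T`. -/
lemma sum_setLIntegral_le_of_gap (f : ℝ → ℝ≥0∞) (S : ℕ → Set ℝ) (T : Set ℝ)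
    (hS : ∀ j, MeasurableSet (S j)) (hsub : ∀ j, S j ⊆ T) (N : ℕ) (hN : N ≠ 0)
    (hdisj : ∀ i j : ℕ, i + N ≤ j → Disjoint (S i) (S j)) :
    ∑' j : ℕ, ∫⁻ t in S j, f t ≤ (N : ℝ≥0∞) * ∫⁻ t in T, f t := by
  haveI : NeZero N := ⟨hN⟩
  have key : ∀ k : Fin N, (∑' m : ℕ, ∫⁻ t in S (m * N + (k : ℕ)), f t) ≤ ∫⁻ t in T, f t := by
    intro k
    have hd : Pairwise (Function.onFun Disjoint (fun m : ℕ => S (m * N + (k : ℕ)))) := by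
      intro i j hij
      rcases lt_or_gt_of_ne hij with h | h
      · exact hdisj _ _ (by nlinarith [Nat.one_le_iff_ne_zero.mpr hN])
      · exact (hdisj _ _ (by nlinarith [Nat.one_le_iff_ne_zero.mpr hN])).symm
    calc ∑' m : ℕ, ∫⁻ t in S (m * N + (k : ℕ)), f t
        = ∫⁻ t, f t ∂(Measure.sum fun m : ℕ => volume.restrict (S (m * N + (k : ℕ)))) :=
          (lintegral_sum_measure f _).symm
      _ = ∫⁻ t in ⋃ m : ℕ, S (m * N + (k : ℕ)), f t := by
          rw [Measure.restrict_iUnion hd (fun m => hS _)]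
      _ ≤ ∫⁻ t in T, f t :=
          lintegral_mono' (Measure.restrict_mono (iUnion_subset fun m => hsub _) le_rfl) le_rfl
  have reindex : (∑' j : ℕ, ∫⁻ t in S j, f t)
      = ∑ k : Fin N, ∑' m : ℕ, ∫⁻ t in S (m * N + (k : ℕ)), f t := by
    rw [← (Nat.divModEquiv N).symm.tsum_eq (fun j => ∫⁻ t in S j, f t)]
    have : ∀ p : ℕ × Fin N, (Nat.divModEquiv N).symm p = p.1 * N + (p.2 : ℕ) := fun p => rfl
    simp_rw [this]
    rw [ENNReal.tsum_prod (f := fun (m : ℕ) (k : Fin N) => ∫⁻ t in S (m * N + (k : ℕ)), f t),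
      ENNReal.tsum_comm, tsum_fintype]
  rw [reindex]
  calc ∑ k : Fin N, ∑' m : ℕ, ∫⁻ t in S (m * N + (k : ℕ)), f t
      ≤ ∑ _k : Fin N, ∫⁻ t in T, f t := Finset.sum_le_sum fun k _ => key k
    _ = (N : ℝ≥0∞) * ∫⁻ t in T, f t := by simp [Finset.sum_const, mul_comm]

/-- Iterated doubling: if `x` and `y` are comparable within a factor `2^n`,
then `τ x ≤ (max 1 Cτ)^n * τ y`. -/
lemma chain_double (τ : ℝ → ℝ≥0∞) (Cτ : ℝ≥0∞)
    (hdouble : ∀ r s : ℝ, 0 < r → 0 < s → 1 / 2 ≤ r / s → r / s ≤ 2 → τ r ≤ Cτ * τ s) :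
    ∀ n : ℕ, ∀ x y : ℝ, 0 < x → 0 < y → x ≤ 2 ^ n * y → y ≤ 2 ^ n * x →
      τ x ≤ (max 1 Cτ) ^ n * τ y := by
  intro n
  induction n with
  | zero =>
    intro x y hx hy h1 h2
    simp only [pow_zero, one_mul] at h1 h2 ⊢
    rw [le_antisymm h1 h2]
  | succ n ih =>
    intro x y hx hy h1 h2
    have hpow : (0:ℝ) < 2 ^ n := by positivity
    have hone : (1:ℝ) ≤ 2 ^ n := one_le_pow₀ (by norm_num)
    set z := min (2 * x) (max (x / 2) y) with hzdef
    have hz0 : 0 < z := lt_min (by linarith) (lt_max_of_lt_left (by linarith))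
    have hz2x : z ≤ 2 * x := min_le_left _ _
    have hzx2 : x / 2 ≤ z := le_min (by linarith) (le_max_left _ _)
    have step1 : τ x ≤ max 1 Cτ * τ z := by
      refine le_trans (hdouble x z hx hz0 ?_ ?_) (mul_le_mul_left (le_max_right _ _) _)
      · rw [le_div_iff₀ hz0]; linarith
      · rw [div_le_iff₀ hz0]; linarith
    have hp : (2:ℝ) ^ (n + 1) = 2 * 2 ^ n := by ring
    rw [hp] at h1 h2
    have hzy : z ≤ 2 ^ n * y := by
      have hx2 : x / 2 ≤ 2 ^ n * y := by linarith
      have hy' : y ≤ 2 ^ n * y := le_mul_of_one_le_left hy.le hone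
      exact le_trans (min_le_right _ _) (max_le hx2 hy')
    have hyz : y ≤ 2 ^ n * z := by
      have hminz : min (2 * x) y ≤ z := min_le_min le_rfl (le_max_right _ _)
      have hy2 : y ≤ 2 ^ n * min (2 * x) y := by
        rcases le_total (2 * x) y with h | h
        · rw [min_eq_left h]; linarith
        · rw [min_eq_right h]; exact le_mul_of_one_le_left hy.le hone
      exact le_trans hy2 (mul_le_mul_of_nonneg_left hminz hpow.le)
    calc τ x ≤ max 1 Cτ * τ z := step1
      _ ≤ max 1 Cτ * ((max 1 Cτ) ^ n * τ y) := mul_le_mul_right (ih z y hz0 hy hzy hyz) _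
      _ = (max 1 Cτ) ^ (n + 1) * τ y := by rw [pow_succ]; ring

/-- Dyadic sums of `ρ̃` are controlled by integrals of `ρ` (resp. of `ρ τ`). -/
theorem stmt14 (ρ τ : ℝ → ℝ≥0∞)
    (hρ : ∀ t : ℝ, 0 < t → 0 < ρ t ∧ ρ t < ⊤)
    (hτ : ∀ t : ℝ, 0 < t → 0 < τ t ∧ τ t < ⊤)
    (K₁ K₂ : ℝ) (hK₁ : 0 < K₁) (hK : K₁ < K₂)
    (C : ℝ≥0∞) (hC : C ≠ ⊤)
    (hsup : ∀ r : ℝ, 0 < r → ∀ t ∈ Set.Icc r (2 * r), ρ t ≤ C * rhoTilde ρ K₁ K₂ r)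
    (Cτ : ℝ≥0∞) (hCτ : Cτ ≠ ⊤)
    (hdouble : ∀ r s : ℝ, 0 < r → 0 < s → 1 / 2 ≤ r / s → r / s ≤ 2 → τ r ≤ Cτ * τ s) :
    ∃ C' : ℝ≥0∞, 0 < C' ∧ C' ≠ ⊤ ∧ ∀ r : ℝ, 0 < r →
      ((∑' j : ℕ, rhoTilde ρ K₁ K₂ ((2 : ℝ) ^ (-(j : ℤ) - 1) * r)) ≤
        C' * ∫⁻ t in Set.Ioc 0 (K₂ * r), ρ t / ENNReal.ofReal t) ∧
      ((∑' j : ℕ, rhoTilde ρ K₁ K₂ ((2 : ℝ) ^ j * r) * τ ((2 : ℝ) ^ j * r)) ≤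
        C' * ∫⁻ t in Set.Ioi (K₁ * r), ρ t * τ t / ENNReal.ofReal t) := by
  -- choose N with K₂ < K₁ * 2^N and M with max K₂ (1/K₁) < 2^M
  obtain ⟨N, hN⟩ : ∃ N : ℕ, K₂ / K₁ < 2 ^ N := pow_unbounded_of_one_lt _ (by norm_num)
  obtain ⟨M, hM⟩ : ∃ M : ℕ, max K₂ (1 / K₁) < 2 ^ M := pow_unbounded_of_one_lt _ (by norm_num)
  have hN0 : N ≠ 0 := by
    rintro rfl
    have : (1:ℝ) < K₂ / K₁ := (one_lt_div hK₁).mpr hK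
    simp at hN; linarith
  have hK₂N : K₂ ≤ K₁ * 2 ^ N := by
    have := (div_lt_iff₀ hK₁).mp hN
    nlinarith
  have hMK₂ : K₂ ≤ 2 ^ M := le_of_lt (lt_of_le_of_lt (le_max_left _ _) hM)
  have hMK₁ : 1 / K₁ ≤ 2 ^ M := le_of_lt (lt_of_le_of_lt (le_max_right _ _) hM)
  set A : ℝ≥0∞ := (max 1 Cτ) ^ M with hAdef
  have hA1 : (1:ℝ≥0∞) ≤ A := one_le_pow_of_one_le' (le_max_left _ _) M
  have hAtop : A ≠ ⊤ := ENNReal.pow_ne_top (by simp [hCτ, lt_top_iff_ne_top])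
  have hA0 : A ≠ 0 := by
    intro h; rw [h] at hA1; exact (not_le.mpr zero_lt_one) hA1
  refine ⟨(N : ℝ≥0∞) * A, ?_, ?_, ?_⟩
  · rw [pos_iff_ne_zero]
    exact mul_ne_zero (Nat.cast_ne_zero.mpr hN0) hA0
  · exact ENNReal.mul_ne_top (natCast_ne_top N) hAtop
  intro r hr
  have hK₂0 : 0 < K₂ := lt_trans hK₁ hK
  constructor
  · -- Part 1
    set S : ℕ → Set ℝ := fun j =>
      Set.Ioc (K₁ * ((2:ℝ) ^ (-(j:ℤ) - 1) * r)) (K₂ * ((2:ℝ) ^ (-(j:ℤ) - 1) * r)) with hSdef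
    have hsum : (∑' j : ℕ, rhoTilde ρ K₁ K₂ ((2 : ℝ) ^ (-(j : ℤ) - 1) * r)) =
        ∑' j : ℕ, ∫⁻ t in S j, ρ t / ENNReal.ofReal t := rfl
    rw [hsum]
    have key : (∑' j : ℕ, ∫⁻ t in S j, ρ t / ENNReal.ofReal t) ≤
        (N : ℝ≥0∞) * ∫⁻ t in Set.Ioc 0 (K₂ * r), ρ t / ENNReal.ofReal t := by
      apply sum_setLIntegral_le_of_gap _ _ _ (fun j => measurableSet_Ioc) ?_ N hN0 ?_
      · intro j t ht
        have hs0 : (0:ℝ) < (2:ℝ) ^ (-(j:ℤ) - 1) * r :=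
          mul_pos (zpow_pos (by norm_num) _) hr
        have hsle : (2:ℝ) ^ (-(j:ℤ) - 1) * r ≤ r := by
          have h1 : (2:ℝ) ^ (-(j:ℤ) - 1) ≤ (2:ℝ) ^ (0:ℤ) :=
            zpow_le_zpow_right₀ (by norm_num) (by omega)
          simp only [zpow_zero] at h1
          nlinarith
        constructor
        · exact lt_of_le_of_lt (by positivity) ht.1
        · exact le_trans ht.2 (by nlinarith)
      · intro i j hij
        have hzi : (0:ℝ) < (2:ℝ) ^ (-(i:ℤ) - 1) := zpow_pos (by norm_num) _
        have hzj : (0:ℝ) < (2:ℝ) ^ (-(j:ℤ) - 1) := zpow_pos (by norm_num) _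
        have hkey : K₂ * ((2:ℝ) ^ (-(j:ℤ) - 1) * r) ≤ K₁ * ((2:ℝ) ^ (-(i:ℤ) - 1) * r) := by
          have e1 : (2:ℝ) ^ (N:ℤ) * (2:ℝ) ^ (-(j:ℤ) - 1) = (2:ℝ) ^ ((N:ℤ) - j - 1) := by
            rw [← zpow_add₀ (two_ne_zero)]; ring_nf
          have e2 : (2:ℝ) ^ ((N:ℤ) - j - 1) ≤ (2:ℝ) ^ (-(i:ℤ) - 1) :=
            zpow_le_zpow_right₀ (by norm_num) (by omega)
          have hN' : K₂ ≤ K₁ * (2:ℝ) ^ (N:ℤ) := by rwa [zpow_natCast]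
          calc K₂ * ((2:ℝ) ^ (-(j:ℤ) - 1) * r)
              ≤ (K₁ * (2:ℝ) ^ (N:ℤ)) * ((2:ℝ) ^ (-(j:ℤ) - 1) * r) := by
                apply mul_le_mul_of_nonneg_right hN' (by positivity)
            _ = K₁ * ((2:ℝ) ^ ((N:ℤ) - j - 1) * r) := by rw [← e1]; ring
            _ ≤ K₁ * ((2:ℝ) ^ (-(i:ℤ) - 1) * r) :=
                mul_le_mul_of_nonneg_left (mul_le_mul_of_nonneg_right e2 hr.le) hK₁.le
        rw [Set.disjoint_left]
        intro t hti htj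
        have h1 := hti.1
        have h2 := htj.2
        simp only [hSdef, Set.mem_Ioc] at hti htj
        linarith [hti.1, htj.2]
    calc (∑' j : ℕ, ∫⁻ t in S j, ρ t / ENNReal.ofReal t)
        ≤ (N : ℝ≥0∞) * ∫⁻ t in Set.Ioc 0 (K₂ * r), ρ t / ENNReal.ofReal t := key
      _ ≤ (N : ℝ≥0∞) * A * ∫⁻ t in Set.Ioc 0 (K₂ * r), ρ t / ENNReal.ofReal t := by
          rw [mul_assoc]
          exact mul_le_mul_right (le_mul_of_one_le_left' hA1) _
  · -- Part 2
    set S : ℕ → Set ℝ := fun j =>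
      Set.Ioc (K₁ * ((2:ℝ) ^ j * r)) (K₂ * ((2:ℝ) ^ j * r)) with hSdef
    have term_le : ∀ j : ℕ,
        rhoTilde ρ K₁ K₂ ((2 : ℝ) ^ j * r) * τ ((2 : ℝ) ^ j * r) ≤
          A * ∫⁻ t in S j, ρ t * τ t / ENNReal.ofReal t := by
      intro j
      have hsj : (0:ℝ) < (2:ℝ) ^ j * r := by positivity
      have hτtop : τ ((2:ℝ) ^ j * r) ≠ ⊤ := (hτ _ hsj).2.ne
      have e1 : rhoTilde ρ K₁ K₂ ((2 : ℝ) ^ j * r) * τ ((2 : ℝ) ^ j * r) =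
          ∫⁻ t in S j, (ρ t / ENNReal.ofReal t) * τ ((2:ℝ) ^ j * r) :=
        (lintegral_mul_const' _ _ hτtop).symm
      rw [e1, ← lintegral_indicator measurableSet_Ioc,
        ← lintegral_indicator (μ := volume)
          (f := fun t => ρ t * τ t / ENNReal.ofReal t) measurableSet_Ioc,
        ← lintegral_const_mul' A _ hAtop]
      apply lintegral_mono
      intro t
      by_cases ht : t ∈ S j
      · simp only [Set.indicator_of_mem (show t ∈ Set.Ioc (K₁ * ((2:ℝ) ^ j * r)) (K₂ * ((2:ℝ) ^ j * r)) from ht)]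
        have ht1 : K₁ * ((2:ℝ) ^ j * r) < t := ht.1
        have ht2 : t ≤ K₂ * ((2:ℝ) ^ j * r) := ht.2
        have ht0 : 0 < t := lt_of_le_of_lt (by positivity) ht1
        have hM2 : (0:ℝ) < 2 ^ M := by positivity
        have hτb : τ ((2:ℝ) ^ j * r) ≤ A * τ t := by
          apply chain_double τ Cτ hdouble M _ _ hsj ht0
          · -- s ≤ 2^M * t
            have h1 : (1:ℝ) ≤ 2 ^ M * K₁ := (div_le_iff₀ hK₁).mp hMK₁
            nlinarith [mul_lt_mul_of_pos_left ht1 hM2, mul_le_mul_of_nonneg_right h1 hsj.le]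
          · -- t ≤ 2^M * s
            nlinarith [mul_le_mul_of_nonneg_right hMK₂ hsj.le]
        calc ρ t / ENNReal.ofReal t * τ ((2:ℝ) ^ j * r)
            ≤ ρ t / ENNReal.ofReal t * (A * τ t) := mul_le_mul_right hτb _
          _ = A * (ρ t * τ t / ENNReal.ofReal t) := by
              simp only [div_eq_mul_inv]; ring
      · simp [Set.indicator_of_notMem (show t ∉ Set.Ioc (K₁ * ((2:ℝ) ^ j * r)) (K₂ * ((2:ℝ) ^ j * r)) from ht)]
    calc (∑' j : ℕ, rhoTilde ρ K₁ K₂ ((2 : ℝ) ^ j * r) * τ ((2 : ℝ) ^ j * r))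
        ≤ ∑' j : ℕ, A * ∫⁻ t in S j, ρ t * τ t / ENNReal.ofReal t :=
          ENNReal.tsum_le_tsum term_le
      _ = A * ∑' j : ℕ, ∫⁻ t in S j, ρ t * τ t / ENNReal.ofReal t := ENNReal.tsum_mul_left
      _ ≤ A * ((N : ℝ≥0∞) * ∫⁻ t in Set.Ioi (K₁ * r), ρ t * τ t / ENNReal.ofReal t) := by
          apply mul_le_mul_right
          apply sum_setLIntegral_le_of_gap _ _ _ (fun j => measurableSet_Ioc) ?_ N hN0 ?_
          · intro j t ht
            have h1 : (1:ℝ) ≤ 2 ^ j := one_le_pow₀ (by norm_num)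
            have : K₁ * r ≤ K₁ * ((2:ℝ) ^ j * r) :=
              mul_le_mul_of_nonneg_left (le_mul_of_one_le_left hr.le h1) hK₁.le
            exact lt_of_le_of_lt this ht.1
          · intro i j hij
            have hkey : K₂ * ((2:ℝ) ^ i * r) ≤ K₁ * ((2:ℝ) ^ j * r) := by
              have e1 : (2:ℝ) ^ N * (2:ℝ) ^ i = (2:ℝ) ^ (N + i) := by rw [← pow_add]
              have e2 : (2:ℝ) ^ (N + i) ≤ (2:ℝ) ^ j := pow_le_pow_right₀ (by norm_num) (by omega)
              have hpi : (0:ℝ) < 2 ^ i := by positivity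
              calc K₂ * ((2:ℝ) ^ i * r) ≤ (K₁ * 2 ^ N) * ((2:ℝ) ^ i * r) := by
                    apply mul_le_mul_of_nonneg_right hK₂N (by positivity)
                _ = K₁ * ((2:ℝ) ^ (N + i) * r) := by rw [← e1]; ring
                _ ≤ K₁ * ((2:ℝ) ^ j * r) :=
                    mul_le_mul_of_nonneg_left (mul_le_mul_of_nonneg_right e2 hr.le) hK₁.le
            rw [Set.disjoint_left]
            intro t hti htj
            simp only [hSdef, Set.mem_Ioc] at hti htj
            linarith [hti.2, htj.1]
      _ = (N : ℝ≥0∞) * A * ∫⁻ t in Set.Ioi (K₁ * r), ρ t * τ t / ENNReal.ofReal t := by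
          rw [← mul_assoc, mul_comm A]
end
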